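/- Let a, b, c, d be entries of a 2×2 submatrix of a matrix within entrywise distance δ of a rank-1 matrix σuv* (ε = δ/(σ‖u‖_∞‖v‖_∞)), where |a| ≥ σ‖u‖_∞‖v‖_∞(μ₂ − ε) with μ₂ = (1+sqrt(1-8ε))/2, ε ≤ 1/8, and |d| ≤ σ‖u‖_∞‖v‖_∞(1+ε). Then |d − b a^{-1} c| ≤ 4δ (1+ε)/(μ₂ − ε) = 8δ(1+ε)/(1 + sqrt(1-8ε) − 2ε). -/

import Mathlib

/-- Error of the rank-1 cross built on a large pivot: for a `2×2` submatrix
`[[a,b],[c,d]]` of `A = σuv* + E` (entrywise `|E| ≤ δ`, `ε = δ/(σ‖u‖_∞‖v‖_∞) ≤ 1/8`),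
with `|a| ≥ σ‖u‖_∞‖v‖_∞(μ₂ - ε)` and `|d| ≤ σ‖u‖_∞‖v‖_∞(1 + ε)`, one has
`|d - b a⁻¹ c| ≤ 4δ(1+ε)/(μ₂-ε) = 8δ(1+ε)/(1 + √(1-8ε) - 2ε)`. -/
theorem cross_pivot_error_bound {m n : ℕ} [NeZero m] [NeZero n]
    (σ : ℝ) (hσ : 0 < σ)
    (u : Fin m → ℂ) (v : Fin n → ℂ)
    (hu : ∑ i, ‖u i‖ ^ 2 = 1) (hv : ∑ j, ‖v j‖ ^ 2 = 1)
    (A E : Matrix (Fin m) (Fin n) ℂ)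
    (hA : ∀ i j, A i j = σ * u i * (starRingEnd ℂ) (v j) + E i j)
    (δ : ℝ) (hδE : ∀ i j, ‖E i j‖ ≤ δ)
    (ε : ℝ)
    (hε : ε = δ / (σ * (⨆ i, ‖u i‖) * (⨆ j, ‖v j‖)))
    (hε8 : ε ≤ 1 / 8)
    (i k : Fin m) (j l : Fin n)
    (ha : σ * (⨆ i, ‖u i‖) * (⨆ j, ‖v j‖) *
        ((1 + Real.sqrt (1 - 8 * ε)) / 2 - ε) ≤ ‖A i j‖)
    (hd : ‖A k l‖ ≤
        σ * (⨆ i, ‖u i‖) * (⨆ j, ‖v j‖) * (1 + ε)) :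
    ‖A k l - A i l * (A i j)⁻¹ * A k j‖ ≤
      8 * δ * (1 + ε) / (1 + Real.sqrt (1 - 8 * ε) - 2 * ε) := by
  set su := ⨆ i, ‖u i‖ with hsu_def
  set sv := ⨆ j, ‖v j‖ with hsv_def
  have hbu : BddAbove (Set.range fun i => ‖u i‖) := (Set.finite_range _).bddAbove
  have hbv : BddAbove (Set.range fun j => ‖v j‖) := (Set.finite_range _).bddAbove
  have hule : ∀ p, ‖u p‖ ≤ su := fun p => le_ciSup hbu p
  have hvle : ∀ q, ‖v q‖ ≤ sv := fun q => le_ciSup hbv q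
  have hsu0 : 0 < su := by
    obtain ⟨i0, hi0⟩ : ∃ p, u p ≠ 0 := by
      by_contra h
      push_neg at h
      simp [h] at hu
    exact lt_of_lt_of_le (norm_pos_iff.mpr hi0) (hule i0)
  have hsv0 : 0 < sv := by
    obtain ⟨j0, hj0⟩ : ∃ q, v q ≠ 0 := by
      by_contra h
      push_neg at h
      simp [h] at hv
    exact lt_of_lt_of_le (norm_pos_iff.mpr hj0) (hvle j0)
  have hM0 : 0 < σ * su * sv := by positivity
  have hδ0 : 0 ≤ δ := le_trans (norm_nonneg _) (hδE 0 0)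
  have hε0 : 0 ≤ ε := by rw [hε]; positivity
  have hεM : δ = ε * (σ * su * sv) := by rw [hε]; field_simp
  have hs0 : 0 ≤ Real.sqrt (1 - 8 * ε) := Real.sqrt_nonneg _
  have hden : 0 < (1 + Real.sqrt (1 - 8 * ε)) / 2 - ε := by nlinarith
  have ha0 : 0 < ‖A i j‖ := lt_of_lt_of_le (mul_pos hM0 hden) ha
  have hane : A i j ≠ 0 := norm_pos_iff.mp ha0
  have hdet : A k l - A i l * (A i j)⁻¹ * A k j
      = (A i j * A k l - A i l * A k j) * (A i j)⁻¹ := by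
    field_simp
  have hexp : A i j * A k l - A i l * A k j =
      (σ:ℂ) * u i * (starRingEnd ℂ) (v j) * E k l
      + (σ:ℂ) * u k * (starRingEnd ℂ) (v l) * E i j
      + E i j * E k l
      - (σ:ℂ) * u i * (starRingEnd ℂ) (v l) * E k j
      - (σ:ℂ) * u k * (starRingEnd ℂ) (v j) * E i l
      - E i l * E k j := by
    rw [hA i j, hA k l, hA i l, hA k j]; ring
  have hT : ∀ (p s : Fin m) (q t : Fin n),
      ‖(σ:ℂ) * u p * (starRingEnd ℂ) (v q) * E s t‖ ≤ σ * su * sv * δ := by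
    intro p s q t
    rw [norm_mul, norm_mul, norm_mul, Complex.norm_conj, Complex.norm_real, Real.norm_eq_abs, abs_of_pos hσ]
    have h1 := hule p
    have h2 := hvle q
    have h3 := hδE s t
    gcongr <;> positivity
  have hEE : ∀ (s s' : Fin m) (t t' : Fin n),
      ‖E s t * E s' t'‖ ≤ σ * su * sv * δ * ε := by
    intro s s' t t'
    rw [norm_mul]
    calc ‖E s t‖ * ‖E s' t'‖
        ≤ δ * δ := mul_le_mul (hδE s t) (hδE s' t') (norm_nonneg _) hδ0
      _ = σ * su * sv * δ * ε := by rw [hεM]; ring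
  have htri : ∀ t1 t2 t3 t4 t5 t6 : ℂ,
      ‖t1 + t2 + t3 - t4 - t5 - t6‖ ≤
        ‖t1‖ + ‖t2‖ + ‖t3‖
        + ‖t4‖ + ‖t5‖ + ‖t6‖ := by
    intro t1 t2 t3 t4 t5 t6
    calc ‖t1 + t2 + t3 - t4 - t5 - t6‖ ≤ ‖t1 + t2 + t3 - t4 - t5‖ + ‖t6‖ := norm_sub_le _ _
      _ ≤ ‖t1 + t2 + t3 - t4‖ + ‖t5‖ + ‖t6‖ := by gcongr; exact norm_sub_le _ _
      _ ≤ ‖t1 + t2 + t3‖ + ‖t4‖ + ‖t5‖ + ‖t6‖ := by gcongr ?_ + _ + _; exact norm_sub_le _ _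
      _ ≤ ‖t1 + t2‖ + ‖t3‖ + ‖t4‖ + ‖t5‖ + ‖t6‖ := by gcongr ?_ + _ + _ + _; exact norm_add_le _ _
      _ ≤ ‖t1‖ + ‖t2‖ + ‖t3‖ + ‖t4‖ + ‖t5‖ + ‖t6‖ := by
          gcongr ?_ + _ + _ + _ + _; exact norm_add_le _ _
  have hdetle : ‖A i j * A k l - A i l * A k j‖
      ≤ σ * su * sv * (4 * δ * (1 + ε)) := by
    rw [hexp]
    have := htri ((σ:ℂ) * u i * (starRingEnd ℂ) (v j) * E k l)
      ((σ:ℂ) * u k * (starRingEnd ℂ) (v l) * E i j) (E i j * E k l)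
      ((σ:ℂ) * u i * (starRingEnd ℂ) (v l) * E k j)
      ((σ:ℂ) * u k * (starRingEnd ℂ) (v j) * E i l) (E i l * E k j)
    have h1 := hT i k j l
    have h2 := hT k i l j
    have h3 := hT i k l j
    have h4 := hT k i j l
    have h5 := hEE i k j l
    have h6 := hEE i k l j
    nlinarith [mul_nonneg (mul_nonneg hM0.le hδ0) hε0]
  have habs_eq : ‖A k l - A i l * (A i j)⁻¹ * A k j‖
      = ‖A i j * A k l - A i l * A k j‖ / ‖A i j‖ := by
    rw [hdet, norm_mul, norm_inv, div_eq_mul_inv]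
  rw [habs_eq]
  have hstep : ‖A i j * A k l - A i l * A k j‖ / ‖A i j‖
      ≤ (σ * su * sv * (4 * δ * (1 + ε))) /
        (σ * su * sv * ((1 + Real.sqrt (1 - 8 * ε)) / 2 - ε)) :=
    div_le_div₀ (by positivity) hdetle (mul_pos hM0 hden) ha
  refine hstep.trans (le_of_eq ?_)
  have h2den : (1 : ℝ) + Real.sqrt (1 - 8 * ε) - 2 * ε ≠ 0 := by nlinarith
  field_simp
  ring
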